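/- arXiv:1610.06159 — 3 statements merged into one kernel-verified Lean document; each statement's English description precedes it below -/
import Mathlib

section
/- Let ν be a Borel probability measure on the unit circle ∂𝔻 ⊂ ℂ and let C ≥ 0 be a constant such that ∫_{∂𝔻} log|z − w| dν(w) ≥ −C for every z ∈ ∂𝔻. Then for every arc (connected subset) A ⊆ ∂𝔻 with 0 < Leb(A) < 1/2, one has ν(A) ≤ (C + log 2)/log(1/Leb(A)). In particular, ν is log-Hölder continuous: there is a constant c > 0 with ν(A) ≤ −c·(log Leb(A))⁻¹ for every arc A with Leb(A) < 1/2. (This is the quantitative content of the Craig–Simon theorem for the density of states of an ergodic family of phased CMV operators, whose Thouless formula gives ∫ log|z−w| dν(w) = L(z) + log ρ_∞ ≥ log ρ_∞, i.e. the hypothesis with C = log(1/ρ_∞).) -/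
noncomputable section
open scoped ENNReal
open MeasureTheory

/-- Arc-length measure on the unit circle ∂𝔻 ⊆ ℂ, the pushforward of Lebesgue
measure on [0, 2π) under τ ↦ e^{iτ}. -/
def circleLeb : Measure ℂ :=
  Measure.map (fun τ : ℝ => Complex.exp (Complex.I * τ))
    (volume.restrict (Set.Ico 0 (2 * Real.pi)))

open Complex Set

section Aux

lemma myLip (s t : ℝ) : ‖Complex.exp (Complex.I*s) - Complex.exp (Complex.I*t)‖ ≤ |s - t| := by
  have h := (lipschitzWith_circleMap 0 1).dist_le_mul s t
  simpa [circleMap, Complex.dist_eq, mul_comm, Real.dist_eq] using h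

lemma e_meas : Measurable (fun τ : ℝ => Complex.exp (Complex.I*τ)) :=
  (Complex.continuous_exp.comp (continuous_const.mul Complex.continuous_ofReal)).measurable

lemma e_cont : Continuous (fun τ : ℝ => Complex.exp (Complex.I*τ)) :=
  Complex.continuous_exp.comp (continuous_const.mul Complex.continuous_ofReal)

lemma e_periodic : Function.Periodic (fun τ : ℝ => Complex.exp (Complex.I*τ)) (2*Real.pi) := by
  intro x
  have : Complex.exp (Complex.I * (x + 2*Real.pi)) = Complex.exp (Complex.I * x) * Complex.exp (2*Real.pi*Complex.I) := by
    rw [← Complex.exp_add]; ring_nf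
  simp [this, Complex.exp_two_pi_mul_I]

lemma arcMeas0 (a b : ℝ) (h0 : 0 ≤ a) (h2 : a < 2*Real.pi) (hab : a ≤ b) (hb : b - a ≤ 2*Real.pi) :
    ENNReal.ofReal (b - a) ≤ circleLeb ((fun τ : ℝ => Complex.exp (Complex.I*τ)) '' Icc a b) := by
  set e := fun τ : ℝ => Complex.exp (Complex.I*τ) with he
  have hBm : MeasurableSet (e '' Icc a b) :=
    ((isCompact_Icc.image e_cont).isClosed).measurableSet
  have hmap : circleLeb (e '' Icc a b)
      = volume (e ⁻¹' (e '' Icc a b) ∩ Ico 0 (2*Real.pi)) := by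
    rw [circleLeb, Measure.map_apply e_meas hBm,
      Measure.restrict_apply (e_meas hBm)]
  rw [hmap]
  rcases le_or_gt b (2*Real.pi) with hble | hbgt
  · calc ENNReal.ofReal (b - a) = volume (Ico a b) := (Real.volume_Ico).symm
      _ ≤ _ := by
        refine measure_mono fun x hx => ⟨⟨x, ⟨hx.1, hx.2.le⟩, rfl⟩, ⟨h0.trans hx.1, lt_of_lt_of_le hx.2 hble⟩⟩
  · have hd : Disjoint (Ico a (2*Real.pi)) (Ico 0 (b - 2*Real.pi)) := by
      refine Set.disjoint_left.2 fun x hx1 hx2 => ?_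
      have : b - 2*Real.pi ≤ a := by linarith
      exact absurd hx2.2 (not_lt.2 (this.trans hx1.1))
    have hsub : Ico a (2*Real.pi) ∪ Ico 0 (b - 2*Real.pi) ⊆ e ⁻¹' (e '' Icc a b) ∩ Ico 0 (2*Real.pi) := by
      rintro x (hx | hx)
      · exact ⟨⟨x, ⟨hx.1, hx.2.le.trans hbgt.le⟩, rfl⟩, ⟨h0.trans hx.1, hx.2⟩⟩
      · refine ⟨⟨x + 2*Real.pi, ⟨by linarith [hx.1], by linarith [hx.2]⟩, ?_⟩, ⟨hx.1, by linarith [hx.2]⟩⟩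
        exact e_periodic x
    calc ENNReal.ofReal (b - a)
        = ENNReal.ofReal (2*Real.pi - a) + ENNReal.ofReal (b - 2*Real.pi) := by
          rw [← ENNReal.ofReal_add (by linarith) (by linarith)]; ring_nf
      _ = volume (Ico a (2*Real.pi)) + volume (Ico 0 (b - 2*Real.pi)) := by
          rw [Real.volume_Ico, Real.volume_Ico]; norm_num
      _ = volume (Ico a (2*Real.pi) ∪ Ico 0 (b - 2*Real.pi)) :=
          (measure_union hd measurableSet_Ico).symm
      _ ≤ _ := measure_mono hsub

lemma arcMeasGen (a b : ℝ) (hab : a ≤ b) (hb : b - a ≤ 2*Real.pi) :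
    ENNReal.ofReal (b - a) ≤ circleLeb ((fun τ : ℝ => Complex.exp (Complex.I*τ)) '' Icc a b) := by
  have hπ : (0:ℝ) < 2*Real.pi := Real.two_pi_pos
  set k : ℤ := ⌊a / (2*Real.pi)⌋ with hk
  have h1 : (k:ℝ) ≤ a / (2*Real.pi) := Int.floor_le _
  have h2 : a / (2*Real.pi) < k + 1 := Int.lt_floor_add_one _
  rw [le_div_iff₀ hπ] at h1
  rw [div_lt_iff₀ hπ] at h2
  have him : (fun τ : ℝ => Complex.exp (Complex.I*τ)) '' Icc a b
      = (fun τ : ℝ => Complex.exp (Complex.I*τ)) '' Icc (a - 2*Real.pi*k) (b - 2*Real.pi*k) := by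
    have hIcc : Icc a b = (fun x : ℝ => x + 2*Real.pi*k) '' Icc (a - 2*Real.pi*k) (b - 2*Real.pi*k) := by
      rw [Set.image_add_const_Icc]; congr 1 <;> ring
    rw [hIcc, Set.image_image]
    refine Set.image_congr fun x _ => ?_
    have := (e_periodic.int_mul k) x
    simpa [mul_comm] using this
  rw [him]
  have := arcMeas0 (a - 2*Real.pi*k) (b - 2*Real.pi*k) (by nlinarith) (by nlinarith) (by linarith)
    (by linarith)
  simpa using this

lemma arcMeasRot (ζ : ℂ) (hζ : ‖ζ‖ = 1) (c d : ℝ) (hcd : c ≤ d) (h2 : d - c ≤ 2*Real.pi) :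
    ENNReal.ofReal (d - c) ≤ circleLeb ((fun τ : ℝ => ζ * Complex.exp (Complex.I*τ)) '' Icc c d) := by
  have hζe : Complex.exp (Complex.I * ζ.arg) = ζ := by
    have := Complex.norm_mul_exp_arg_mul_I ζ
    rw [hζ] at this; simpa [mul_comm] using this
  have him : (fun τ : ℝ => ζ * Complex.exp (Complex.I*τ)) '' Icc c d
      = (fun τ : ℝ => Complex.exp (Complex.I*τ)) '' Icc (ζ.arg + c) (ζ.arg + d) := by
    rw [← Set.image_const_add_Icc, Set.image_image]
    refine Set.image_congr fun x _ => ?_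
    push_cast
    conv_lhs => rw [← hζe]
    rw [← Complex.exp_add]
    ring_nf
  rw [him]
  have := arcMeasGen (ζ.arg + c) (ζ.arg + d) (by linarith) (by linarith)
  simpa using this

lemma circleLeb_sphere_exists (A : Set ℂ) (hsm : circleLeb A < ENNReal.ofReal (1/2)) :
    ∃ p, p ∈ Metric.sphere (0:ℂ) 1 ∧ p ∉ A := by
  by_contra hcon
  push_neg at hcon
  have hsub : Metric.sphere (0:ℂ) 1 ⊆ A := hcon
  have hms : MeasurableSet (Metric.sphere (0:ℂ) 1) := Metric.isClosed_sphere.measurableSet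
  have hpre : (fun τ : ℝ => Complex.exp (Complex.I*τ)) ⁻¹' (Metric.sphere (0:ℂ) 1) = univ := by
    ext τ; simp [Complex.norm_exp]
  have hc : circleLeb (Metric.sphere (0:ℂ) 1) = ENNReal.ofReal (2*Real.pi) := by
    rw [circleLeb, Measure.map_apply e_meas hms, hpre, Measure.restrict_apply MeasurableSet.univ]
    simp [Real.volume_Ico]
  have h1 : circleLeb (Metric.sphere (0:ℂ) 1) ≤ circleLeb A := measure_mono hsub
  rw [hc] at h1
  have : (2*Real.pi : ℝ) ≤ 1/2 := by
    have := lt_of_le_of_lt h1 hsm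
    exact_mod_cast (ENNReal.ofReal_lt_ofReal_iff (by norm_num)).mp this |>.le
  nlinarith [Real.pi_gt_three]

lemma chord (A : Set ℂ) (hA : A ⊆ Metric.sphere (0:ℂ) 1) (hconn : IsPreconnected A)
    (hsm : circleLeb A < ENNReal.ofReal (1/2)) :
    ∀ z ∈ A, ∀ w ∈ A, ‖z - w‖ ≤ (circleLeb A).toReal := by
  intro z hz w hw
  obtain ⟨p, hp, hpA⟩ := circleLeb_sphere_exists A hsm
  have hp1 : ‖p‖ = 1 := by simpa using hp
  have hp0 : p ≠ 0 := by intro h; rw [h] at hp1; simp at hp1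
  set h : ℂ → ℝ := fun w => Complex.arg (-w / p) with hh
  have habs : ∀ a ∈ A, ‖-a / p‖ = 1 := by
    intro a ha
    have : ‖a‖ = 1 := by simpa using hA ha
    simp [norm_div, this, hp1]
  have hrec : ∀ a ∈ A, a = -p * Complex.exp (Complex.I * h a) := by
    intro a ha
    have h1 : (‖-a / p‖ : ℂ) * Complex.exp ((-a / p).arg * Complex.I) = -a / p :=
      Complex.norm_mul_exp_arg_mul_I _
    rw [habs a ha] at h1
    simp only [Complex.ofReal_one, one_mul] at h1
    rw [hh]
    simp only []
    rw [mul_comm Complex.I _, h1]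
    field_simp
  have hcont : ContinuousOn h A := by
    intro a ha
    refine ContinuousAt.continuousWithinAt ?_
    have hmem : (-a / p) ∈ Complex.slitPlane := by
      rw [Complex.mem_slitPlane_iff]
      by_contra hcon
      push_neg at hcon
      have him : (-a/p).im = 0 := hcon.2
      have hre : (-a/p).re ≤ 0 := hcon.1
      have hv : (-a/p) = ((-a/p).re : ℂ) := Complex.ext rfl (by simp [him])
      have : |(-a/p).re| = 1 := by
        have := habs a ha
        rw [hv] at this
        simpa using this
      have : (-a/p) = -1 := by
        rw [hv]
        have : (-a/p).re = -1 := by rcases abs_cases ((-a/p).re) with ⟨h1,h2⟩|⟨h1,h2⟩ <;> linarith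
        rw [this]; simp
      have : a = p := by
        field_simp at this
        linear_combination -this
      exact hpA (this ▸ ha)
    have hca : ContinuousAt (fun w : ℂ => -w / p) a := by fun_prop
    exact ContinuousAt.comp (g := Complex.arg) (f := fun w : ℂ => -w / p) (x := a) (Complex.continuousAt_arg hmem) hca
  have hOrd : OrdConnected (h '' A) := ((hconn.image h hcont)).ordConnected
  set s := min (h z) (h w) with hs
  set t := max (h z) (h w) with ht
  have hsA : s ∈ h '' A := by
    rcases le_total (h z) (h w) with hle|hle
    · rw [hs, min_eq_left hle]; exact ⟨z, hz, rfl⟩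
    · rw [hs, min_eq_right hle]; exact ⟨w, hw, rfl⟩
  have htA : t ∈ h '' A := by
    rcases le_total (h z) (h w) with hle|hle
    · rw [ht, max_eq_right hle]; exact ⟨w, hw, rfl⟩
    · rw [ht, max_eq_left hle]; exact ⟨z, hz, rfl⟩
  have hIcc : Icc s t ⊆ h '' A := hOrd.out hsA htA
  have hE : (fun τ : ℝ => (-p) * Complex.exp (Complex.I*τ)) '' Icc s t ⊆ A := by
    rintro - ⟨τ, hτ, rfl⟩
    obtain ⟨a, haA, rfl⟩ := hIcc hτ
    show -p * Complex.exp (Complex.I * h a) ∈ A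
    rw [← hrec a haA]
    exact haA
  have hst2π : t - s ≤ 2*Real.pi := by
    have h1 := Complex.neg_pi_lt_arg (-z/p)
    have h2 := Complex.arg_le_pi (-z/p)
    have h3 := Complex.neg_pi_lt_arg (-w/p)
    have h4 := Complex.arg_le_pi (-w/p)
    simp only [hs, ht, hh]
    rcases le_total (Complex.arg (-z/p)) (Complex.arg (-w/p)) with hle|hle <;>
      simp [min_def, max_def, hle] <;> linarith
  have hmeas : ENNReal.ofReal (t - s) ≤ circleLeb A := by
    refine le_trans ?_ (measure_mono hE)
    exact arcMeasRot (-p) (by simp [hp1]) s t (min_le_max) hst2π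
  have hne : circleLeb A ≠ ⊤ := (hsm.trans_le le_top).ne
  have hts : t - s ≤ (circleLeb A).toReal := by
    rw [← ENNReal.ofReal_le_iff_le_toReal hne] at *
    exact hmeas
  have hlip : ‖Complex.exp (Complex.I * (h z)) - Complex.exp (Complex.I * (h w))‖ ≤ |h z - h w| := by
    have hl := (lipschitzWith_circleMap 0 1).dist_le_mul (h z) (h w)
    simpa [circleMap, Complex.dist_eq, mul_comm, Real.dist_eq] using hl
  have hzw : z - w = (-p) * (Complex.exp (Complex.I * h z) - Complex.exp (Complex.I * h w)) := by
    rw [mul_sub]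
    rw [← hrec z hz, ← hrec w hw]
  calc ‖z - w‖
      = ‖Complex.exp (Complex.I * h z) - Complex.exp (Complex.I * h w)‖ := by
        rw [hzw, norm_mul]; simp [hp1]
    _ ≤ |h z - h w| := hlip
    _ = t - s := by
        rcases le_total (h z) (h w) with hle|hle
        · rw [_root_.abs_of_nonpos (by linarith), ht, hs, max_eq_right hle, min_eq_left hle]; ring
        · rw [_root_.abs_of_nonneg (by linarith), ht, hs, max_eq_left hle, min_eq_right hle]
    _ ≤ _ := hts

variable (ν : Measure ℂ) [IsProbabilityMeasure ν]
  (hsupp : ν (Metric.sphere (0 : ℂ) 1)ᶜ = 0)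
  (C : ℝ) (hC : 0 ≤ C)
  (hpot : ∀ z ∈ Metric.sphere (0 : ℂ) 1,
      Integrable (fun w => Real.log (‖z - w‖)) ν ∧
        -C ≤ ∫ w, Real.log (‖z - w‖) ∂ν)

include hsupp in
lemma intT (z : ℂ) (hz : z ∈ Metric.sphere (0:ℂ) 1) (T : Set ℂ)
    (hint : Integrable (fun w => Real.log (‖z - w‖)) ν) :
    ∫ w in T, Real.log (‖z - w‖) ∂ν ≤ Real.log 2 := by
  have hae : ∀ᵐ w ∂ν, w ∈ Metric.sphere (0:ℂ) 1 := by
    rw [ae_iff]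
    exact hsupp
  have hb : ∀ᵐ w ∂ν, Real.log (‖z - w‖) ≤ Real.log 2 := by
    filter_upwards [hae] with w hw
    have h2 : ‖z - w‖ ≤ 2 := by
      have h1 : ‖z - w‖ ≤ ‖z‖ + ‖w‖ := by
        simpa [sub_eq_add_neg] using norm_add_le z (-w)
      have hz1 : ‖z‖ = 1 := by simpa using hz
      have hw1 : ‖w‖ = 1 := by simpa using hw
      rw [hz1, hw1] at h1; linarith
    rcases eq_or_lt_of_le (norm_nonneg (z - w)) with h0 | h0
    · rw [← h0, Real.log_zero]
      exact Real.log_nonneg (by norm_num)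
    · exact Real.log_le_log h0 h2
  have hc : ∫ w in T, Real.log (‖z - w‖) ∂ν ≤ ∫ _ in T, Real.log 2 ∂ν := by
    refine setIntegral_mono_ae hint.integrableOn ?_ hb
    exact integrableOn_const (measure_ne_top ν T)
  rw [setIntegral_const] at hc
  have h1 : (ν T).toReal ≤ 1 := by
    have := ENNReal.toReal_mono (by simp) (prob_le_one (μ := ν) (s := T))
    simpa using this
  have hlog2 : (0:ℝ) ≤ Real.log 2 := Real.log_nonneg (by norm_num)
  calc ∫ w in T, Real.log (‖z - w‖) ∂ν ≤ (ν T).toReal • Real.log 2 := hc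
    _ ≤ Real.log 2 := by
        rw [smul_eq_mul]
        nlinarith

include hsupp hC hpot in
lemma noatom (z₀ : ℂ) (hz₀ : z₀ ∈ Metric.sphere (0:ℂ) 1) : ν {z₀} = 0 := by
  set m := (ν {z₀}).toReal with hm
  have hm0 : 0 ≤ m := ENNReal.toReal_nonneg
  have key : ∀ η : ℝ, 0 < η → m ≤ η := by
    intro η hη
    set ε := min (1/2 : ℝ) (Real.exp (-(C + Real.log 2)/η)) with hε
    have hε0 : 0 < ε := lt_min (by norm_num) (Real.exp_pos _)
    have hε2 : ε ≤ 1/2 := min_le_left _ _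
    set z := z₀ * Complex.exp (Complex.I * ε) with hzdef
    have hz₀1 : ‖z₀‖ = 1 := by simpa using hz₀
    have hzs : z ∈ Metric.sphere (0:ℂ) 1 := by
      simp [hzdef, Complex.norm_exp, hz₀1]
    set r := ‖z - z₀‖ with hr
    have hrε : r ≤ ε := by
      have h1 : z - z₀ = z₀ * (Complex.exp (Complex.I * ε) - Complex.exp (Complex.I * (0:ℝ))) := by
        rw [hzdef]; push_cast; ring_nf; rw [Complex.exp_zero]; ring
      have h2 := myLip ε 0
      rw [hr, h1, norm_mul, hz₀1, one_mul]
      simpa [_root_.abs_of_nonneg hε0.le] using h2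
    have hr0 : 0 < r := by
      rw [hr]
      have : z - z₀ ≠ 0 := by
        rw [hzdef, sub_ne_zero]
        intro hcon
        have hz₀0 : z₀ ≠ 0 := by intro h; rw [h] at hz₀1; simp at hz₀1
        have : Complex.exp (Complex.I * ε) = 1 :=
          mul_left_cancel₀ hz₀0 (hcon.trans (mul_one z₀).symm)
        rw [Complex.exp_eq_one_iff] at this
        obtain ⟨n, hn⟩ := this
        have hne : (ε : ℂ) = n * (2 * Real.pi) := by
          have h2 : Complex.I * ε = Complex.I * (n * (2 * Real.pi)) := by rw [hn]; ring
          exact mul_left_cancel₀ Complex.I_ne_zero h2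
        have hεr : ε = n * (2 * Real.pi) := by exact_mod_cast hne
        have hπ := Real.pi_gt_three
        rcases le_or_gt (n:ℝ) 0 with hn0 | hn0
        · nlinarith
        · have : (1:ℝ) ≤ n := by exact_mod_cast hn0
          nlinarith
      simpa [norm_pos_iff] using this
    have hr1 : r < 1 := by linarith
    obtain ⟨hint, hlow⟩ := hpot z hzs
    have hsplit : (∫ w in {z₀}, Real.log (‖z - w‖) ∂ν)
        + (∫ w in {z₀}ᶜ, Real.log (‖z - w‖) ∂ν)
        = ∫ w, Real.log (‖z - w‖) ∂ν :=
      integral_add_compl (measurableSet_singleton z₀) hint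
    have hsing : (∫ w in {z₀}, Real.log (‖z - w‖) ∂ν) = m * Real.log r := by
      rw [integral_singleton]
      simp [hm, hr, smul_eq_mul, Measure.real]
    have hcompl := intT ν hsupp z hzs {z₀}ᶜ hint
    have hineq : -C ≤ m * Real.log r + Real.log 2 := by
      rw [← hsplit, hsing] at hlow
      linarith
    have hlogr : Real.log r ≤ -(C + Real.log 2)/η := by
      calc Real.log r ≤ Real.log ε := Real.log_le_log hr0 hrε
        _ ≤ Real.log (Real.exp (-(C + Real.log 2)/η)) :=
            Real.log_le_log hε0 (min_le_right _ _)
        _ = -(C + Real.log 2)/η := Real.log_exp _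
    have hCl2 : 0 < C + Real.log 2 := by
      have : (0:ℝ) < Real.log 2 := Real.log_pos (by norm_num)
      linarith
    have h5 := mul_le_mul_of_nonneg_left hlogr hm0
    have h6 : m * (C + Real.log 2) / η ≤ C + Real.log 2 := by
      have heq : m * (-(C + Real.log 2)/η) = -(m * (C + Real.log 2) / η) := by ring
      rw [heq] at h5
      linarith
    have h7 := (div_le_iff₀ hη).mp h6
    exact (mul_le_mul_iff_of_pos_right hCl2).mp (by linarith)
  have : m ≤ 0 := le_of_forall_pos_le_add (by intro η hη; simpa using key η hη)
  have hmz : m = 0 := le_antisymm this hm0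
  have := (ENNReal.toReal_eq_zero_iff _).mp hmz
  rcases this with h | h
  · exact h
  · exact absurd h (measure_ne_top ν _)

include hsupp hC hpot in
lemma core (z₀ : ℂ) (hz₀ : z₀ ∈ Metric.sphere (0:ℂ) 1)
    (B : Set ℂ) (hBm : MeasurableSet B) (δ : ℝ) (hδ0 : 0 < δ) (hδ : δ < 1/2)
    (hB : ∀ w ∈ B, ‖z₀ - w‖ ≤ δ) :
    (ν B).toReal ≤ (C + Real.log 2) / Real.log (1/δ) := by
  obtain ⟨hint, hlow⟩ := hpot z₀ hz₀
  have hν0 : ν {z₀} = 0 := noatom ν hsupp C hC hpot z₀ hz₀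
  have hae : ∀ᵐ w ∂ν, w ≠ z₀ := by
    rw [ae_iff]
    simpa using hν0
  have hbd : ∀ᵐ w ∂(ν.restrict B), Real.log (‖z₀ - w‖) ≤ Real.log δ := by
    rw [ae_restrict_iff' hBm]
    filter_upwards [hae] with w hw hwB
    have hpos : 0 < ‖z₀ - w‖ := by
      simpa [norm_pos_iff, sub_ne_zero] using hw.symm
    exact Real.log_le_log hpos (hB w hwB)
  have hB1 : ∫ w in B, Real.log (‖z₀ - w‖) ∂ν ≤ (ν B).toReal * Real.log δ := by
    have := setIntegral_mono_ae_restrict hint.integrableOn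
      (integrableOn_const (measure_ne_top ν B)) hbd
    rwa [setIntegral_const, smul_eq_mul] at this
  have hB2 := intT ν hsupp z₀ hz₀ Bᶜ hint
  have hsplit := integral_add_compl hBm hint
  have hineq : -C ≤ (ν B).toReal * Real.log δ + Real.log 2 := by
    rw [← hsplit] at hlow
    linarith
  have hL : Real.log (1/δ) = -Real.log δ := by rw [one_div, Real.log_inv]
  have hLpos : 0 < Real.log (1/δ) := by
    rw [hL]
    have : Real.log δ < 0 := Real.log_neg hδ0 (by linarith)
    linarith
  rw [le_div_iff₀ hLpos]
  calc (ν B).toReal * Real.log (1/δ) = -((ν B).toReal * Real.log δ) := by rw [hL]; ring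
    _ ≤ C + Real.log 2 := by linarith

include hsupp hC hpot in
lemma mainbound (A : Set ℂ) (hA : A ⊆ Metric.sphere (0:ℂ) 1) (hconn : IsPreconnected A)
    (hsm : circleLeb A < ENNReal.ofReal (1/2)) (hpos : 0 < (circleLeb A).toReal) :
    (ν A).toReal ≤ (C + Real.log 2) / Real.log (1 / (circleLeb A).toReal) := by
  set ℓ := (circleLeb A).toReal with hℓ
  have hℓhalf : ℓ < 1/2 := ENNReal.toReal_lt_of_lt_ofReal hsm
  obtain ⟨z₀, hz₀A⟩ : A.Nonempty := by
    rcases A.eq_empty_or_nonempty with h | h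
    · rw [h] at hℓ; simp [hℓ] at hpos
    · exact h
  have hz₀s : z₀ ∈ Metric.sphere (0:ℂ) 1 := hA hz₀A
  have hchord := chord A hA hconn hsm
  have hBclosed : IsClosed {w : ℂ | ‖z₀ - w‖ ≤ ℓ} := by
    have hcont : Continuous fun w : ℂ => ‖z₀ - w‖ :=
      continuous_norm.comp (continuous_const.sub continuous_id)
    exact isClosed_le hcont continuous_const
  have hsub : A ⊆ {w : ℂ | ‖z₀ - w‖ ≤ ℓ} := fun w hw => hchord z₀ hz₀A w hw
  have hclosA : closure A ⊆ {w : ℂ | ‖z₀ - w‖ ≤ ℓ} := closure_minimal hsub hBclosed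
  have hcore := core ν hsupp C hC hpot z₀ hz₀s (closure A) isClosed_closure.measurableSet
    ℓ hpos hℓhalf (fun w hw => hclosA hw)
  refine le_trans ?_ hcore
  exact ENNReal.toReal_mono (measure_ne_top ν _) (measure_mono subset_closure)

end Aux

/-- quantitative Craig–Simon: log-Hölder continuity. If ν is a Borel
probability measure on ∂𝔻 with ∫ log|z−w| dν(w) ≥ −C for all z ∈ ∂𝔻, then for every arc
A with 0 < Leb(A) < 1/2 one has ν(A) ≤ (C + log 2)/log(1/Leb(A)); in particular ν is
log-Hölder continuous. -/
theorem logHolder_of_log_potential_lower_bound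
    (ν : Measure ℂ) [IsProbabilityMeasure ν]
    (hsupp : ν (Metric.sphere (0 : ℂ) 1)ᶜ = 0)
    (C : ℝ) (hC : 0 ≤ C)
    (hpot : ∀ z ∈ Metric.sphere (0 : ℂ) 1,
      Integrable (fun w => Real.log (‖z - w‖)) ν ∧
        -C ≤ ∫ w, Real.log (‖z - w‖) ∂ν) :
    (∀ A : Set ℂ, A ⊆ Metric.sphere (0 : ℂ) 1 → IsPreconnected A →
        0 < circleLeb A → circleLeb A < ENNReal.ofReal (1 / 2) →
        (ν A).toReal ≤ (C + Real.log 2) / Real.log (1 / (circleLeb A).toReal)) ∧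
    ∃ c : ℝ, 0 < c ∧
      ∀ A : Set ℂ, A ⊆ Metric.sphere (0 : ℂ) 1 → IsPreconnected A →
        circleLeb A < ENNReal.ofReal (1 / 2) →
        (ν A).toReal ≤ -c * (Real.log ((circleLeb A).toReal))⁻¹ := by
  have hCl2 : 0 < C + Real.log 2 := by
    have : (0:ℝ) < Real.log 2 := Real.log_pos (by norm_num)
    linarith
  constructor
  · intro A hA hconn hpos hsm
    have hne : circleLeb A ≠ ⊤ := (hsm.trans_le le_top).ne
    exact mainbound ν hsupp C hC hpot A hA hconn (by simpa using hsm)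
      (ENNReal.toReal_pos hpos.ne' hne)
  · refine ⟨C + Real.log 2, hCl2, fun A hA hconn hsm => ?_⟩
    set ℓ := (circleLeb A).toReal with hℓ
    rcases eq_or_lt_of_le (ENNReal.toReal_nonneg : (0:ℝ) ≤ ℓ) with h0 | h0
    · -- ℓ = 0
      rw [← hℓ] at h0
      rw [← h0, Real.log_zero, inv_zero, mul_zero]
      rcases A.eq_empty_or_nonempty with hAe | ⟨z₀, hz₀⟩
      · simp [hAe]
      · have hz₀s : z₀ ∈ Metric.sphere (0:ℂ) 1 := hA hz₀
        have hchord := chord A hA hconn (by simpa using hsm)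
        have hAsub : A ⊆ {z₀} := by
          intro w hw
          have h1 := hchord z₀ hz₀ w hw
          rw [← hℓ, ← h0] at h1

          have h2 : ‖z₀ - w‖ = 0 :=
            le_antisymm h1 (norm_nonneg _)
          have h3 : z₀ = w := by simpa [sub_eq_zero] using h2
          simp [h3.symm]
        have hν0 : ν {z₀} = 0 := noatom ν hsupp C hC hpot z₀ hz₀s
        have : ν A = 0 := le_antisymm (hν0 ▸ measure_mono hAsub) (zero_le)
        simp [this]
    · -- 0 < ℓ
      have hmain := mainbound ν hsupp C hC hpot A hA hconn (by simpa using hsm) h0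
      have heq : (C + Real.log 2) / Real.log (1 / ℓ)
          = -(C + Real.log 2) * (Real.log ℓ)⁻¹ := by
        rw [one_div, Real.log_inv, div_neg, div_eq_mul_inv]
        ring
      rw [← hℓ] at hmain
      rw [heq] at hmain
      exact hmain
end
end

section
/- Let α, β ∈ 𝔻 = {z ∈ ℂ : |z| < 1} and λ, μ ∈ ∂𝔻, and for τ ∈ ℝ define T(τ) = P(α,λ;e^{iτ})·Q(β,μ;e^{iτ}). Then with ζ = e^{iτ}: T(τ) = (ρ_α·ρ_β)⁻¹·[[conj(α)·β + ζ/(μλ), −conj(α)·μ/ζ − conj(β)/λ],[−βλ − αζ/μ, μλ/ζ + α·conj(β)]], and T(τ)⁻¹·T'(τ) = (i/ρ_β²)·[[1, −conj(β)·μ/ζ],[β·ζ/μ, −1]], where T' denotes the entrywise derivative of T with respect to τ, ρ_α = √(1−|α|²), ρ_β = √(1−|β|²). -/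
noncomputable section
open scoped ENNReal
open Complex Matrix

/-- ρ = √(1 − |α|²). -/
def rho (w : ℂ) : ℝ := Real.sqrt (1 - ‖w‖ ^ 2)

/-- The Gesztesy–Zinchenko transfer matrix P(α, λ; z). -/
def Pmat (α lam z : ℂ) : Matrix (Fin 2) (Fin 2) ℂ :=
  ((rho α : ℂ))⁻¹ • !![-((starRingEnd ℂ) α), lam⁻¹; lam, -α]

/-- The Gesztesy–Zinchenko transfer matrix Q(α, λ; z). -/
def Qmat (α lam z : ℂ) : Matrix (Fin 2) (Fin 2) ℂ :=
  ((rho α : ℂ))⁻¹ • !![-α, lam * z⁻¹; lam⁻¹ * z, -((starRingEnd ℂ) α)]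

/-- Y(n; z): the one-step transfer matrix. -/
def Ymat (a lam : ℤ → ℂ) (z : ℂ) (n : ℤ) : Matrix (Fin 2) (Fin 2) ℂ :=
  if Odd n then Pmat (a n) (lam n) z else Qmat (a n) (lam n) z

/-- Z(n, 0; z) = Y(n−1; z) ⋯ Y(0; z). -/
def Zmat (a lam : ℤ → ℂ) (z : ℂ) : ℕ → Matrix (Fin 2) (Fin 2) ℂ
  | 0 => 1
  | n + 1 => Ymat a lam z n * Zmat a lam z n

/-- Frobenius (Hilbert–Schmidt) norm of a 2×2 complex matrix. -/
def matNorm (M : Matrix (Fin 2) (Fin 2) ℂ) : ℝ :=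
  Real.sqrt (∑ i, ∑ j, ‖M i j‖ ^ 2)

/-- The group SU(1,1) of 2×2 complex matrices. -/
def SU11 : Set (Matrix (Fin 2) (Fin 2) ℂ) :=
  {M | M.det = 1 ∧ Mᴴ * !![1, 0; 0, -1] * M = !![1, 0; 0, -1]}

/-- The rotation matrix R_θ = diag(e^{iθ}, e^{−iθ}). -/
def Rtheta (θ : ℝ) : Matrix (Fin 2) (Fin 2) ℂ :=
  !![Complex.exp (θ * Complex.I), 0; 0, Complex.exp (-θ * Complex.I)]

/-- 𝕂: the diagonal subgroup of SU(1,1). -/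
def Kset : Set (Matrix (Fin 2) (Fin 2) ℂ) := {R | ∃ θ : ℝ, R = Rtheta θ}

/-- The iTrace of a 2×2 complex matrix. -/
def iTr (M : Matrix (Fin 2) (Fin 2) ℂ) : ℂ := (M 0 0 - M 1 1) / (2 * Complex.I)

/-- M_ξ, the standard SU(1,1) element moving 0 to ξ. -/
def Mxi (ξ : ℂ) : Matrix (Fin 2) (Fin 2) ℂ :=
  ((Real.sqrt (1 - ‖ξ‖ ^ 2) : ℂ))⁻¹ • !![1, ξ; (starRingEnd ℂ) ξ, 1]

set_option maxHeartbeats 1000000 in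
/-- explicit form of T = PQ and of T⁻¹T′. -/
theorem Tmat_and_logarithmic_derivative
    (α β lam mu : ℂ) (hα : ‖α‖ < 1) (hβ : ‖β‖ < 1)
    (hlam : ‖lam‖ = 1) (hmu : ‖mu‖ = 1)
    (T : ℝ → Matrix (Fin 2) (Fin 2) ℂ)
    (hT : ∀ t : ℝ, T t =
      Pmat α lam (Complex.exp (Complex.I * t)) * Qmat β mu (Complex.exp (Complex.I * t)))
    (τ : ℝ) (ζ : ℂ) (hζ : ζ = Complex.exp (Complex.I * τ)) :
    T τ = ((rho α * rho β : ℝ) : ℂ)⁻¹ •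
        !![(starRingEnd ℂ) α * β + ζ / (mu * lam),
            -((starRingEnd ℂ) α * mu / ζ) - (starRingEnd ℂ) β / lam;
          -(β * lam) - α * ζ / mu,
            mu * lam / ζ + α * (starRingEnd ℂ) β] ∧
    (T τ)⁻¹ * (Matrix.of fun i j => deriv (fun t => T t i j) τ) =
      (Complex.I / (rho β : ℂ) ^ 2) •
        !![1, -((starRingEnd ℂ) β * mu / ζ); β * ζ / mu, -1] := by
  have hζ0 : ζ ≠ 0 := by rw [hζ]; exact Complex.exp_ne_zero _
  have hl0 : lam ≠ 0 := by
    intro h; rw [h] at hlam; simp at hlam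
  have hm0 : mu ≠ 0 := by
    intro h; rw [h] at hmu; simp at hmu
  have hra0 : (0:ℝ) < rho α := Real.sqrt_pos.2 (by nlinarith [norm_nonneg α])
  have hrb0 : (0:ℝ) < rho β := Real.sqrt_pos.2 (by nlinarith [norm_nonneg β])
  have hra : ((rho α : ℝ) : ℂ) ≠ 0 := by exact_mod_cast hra0.ne'
  have hrb : ((rho β : ℝ) : ℂ) ≠ 0 := by exact_mod_cast hrb0.ne'
  have hra2 : ((rho α : ℝ) : ℂ) ^ 2 = 1 - α * (starRingEnd ℂ) α := by
    have h1 : (rho α) ^ 2 = 1 - ‖α‖ ^ 2 :=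
      Real.sq_sqrt (by nlinarith [norm_nonneg α])
    rw [← Complex.ofReal_pow, h1, Complex.mul_conj, Complex.normSq_eq_norm_sq]
    push_cast; ring
  have hrb2 : ((rho β : ℝ) : ℂ) ^ 2 = 1 - β * (starRingEnd ℂ) β := by
    have h1 : (rho β) ^ 2 = 1 - ‖β‖ ^ 2 :=
      Real.sq_sqrt (by nlinarith [norm_nonneg β])
    rw [← Complex.ofReal_pow, h1, Complex.mul_conj, Complex.normSq_eq_norm_sq]
    push_cast; ring
  set c : ℂ := ((rho α * rho β : ℝ) : ℂ)⁻¹ with hc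
  -- general form of T t
  have hform : ∀ t : ℝ, T t = c •
      !![(starRingEnd ℂ) α * β + Complex.exp (Complex.I * t) / (mu * lam),
          -((starRingEnd ℂ) α * mu * Complex.exp (-(Complex.I * t))) - (starRingEnd ℂ) β / lam;
        -(β * lam) - α * Complex.exp (Complex.I * t) / mu,
          mu * lam * Complex.exp (-(Complex.I * t)) + α * (starRingEnd ℂ) β] := by
    intro t
    have he0 : Complex.exp (Complex.I * t) ≠ 0 := Complex.exp_ne_zero _
    rw [hT t]
    unfold Pmat Qmat
    ext i j
    fin_cases i <;> fin_cases j <;>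
      simp [Matrix.mul_apply, Fin.sum_univ_two, Complex.exp_neg, hc] <;>
      field_simp <;> ring
  have hen : Complex.exp (-(Complex.I * τ)) = ζ⁻¹ := by rw [Complex.exp_neg, hζ]
  have hpart1 : T τ = c •
      !![(starRingEnd ℂ) α * β + ζ / (mu * lam),
          -((starRingEnd ℂ) α * mu / ζ) - (starRingEnd ℂ) β / lam;
        -(β * lam) - α * ζ / mu,
          mu * lam / ζ + α * (starRingEnd ℂ) β] := by
    rw [hform τ, hen, ← hζ]
    simp only [div_eq_mul_inv]
  refine ⟨hpart1, ?_⟩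
  -- derivatives
  have hid : HasDerivAt (fun t : ℝ => Complex.I * (t : ℂ)) Complex.I τ := by
    have h1 : HasDerivAt (fun t : ℝ => (t : ℂ)) 1 τ := by
      simpa using (hasDerivAt_id τ).ofReal_comp
    simpa using h1.const_mul Complex.I
  have hexp : HasDerivAt (fun t : ℝ => Complex.exp (Complex.I * t)) (Complex.I * ζ) τ := by
    have h2 := hid.cexp
    rw [hζ]
    simpa [mul_comm] using h2
  have hexpneg : HasDerivAt (fun t : ℝ => Complex.exp (-(Complex.I * t)))
      (-(Complex.I * ζ⁻¹)) τ := by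
    have h2 := hid.neg.cexp
    rw [show (-(Complex.I * ζ⁻¹)) = Complex.exp (-(Complex.I * τ)) * -Complex.I by rw [hen]; ring]
    exact h2
  have hcc : ((rho α * rho β : ℝ) : ℂ) ≠ 0 := by push_cast; exact mul_ne_zero hra hrb
  have hbb : (1 : ℂ) - β * (starRingEnd ℂ) β ≠ 0 := by
    rw [← hrb2]; exact pow_ne_zero 2 hrb
  set C : Matrix (Fin 2) (Fin 2) ℂ := (Complex.I / (rho β : ℂ) ^ 2) •
      !![1, -((starRingEnd ℂ) β * mu / ζ); β * ζ / mu, -1] with hC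
  -- derivative matrix equals T τ * C
  have hder : (Matrix.of fun i j => deriv (fun t => T t i j) τ) = T τ * C := by
    ext i j
    fin_cases i <;> fin_cases j
    · have hf : (fun t : ℝ => T t 0 0) = fun t : ℝ =>
          c * ((starRingEnd ℂ) α * β + Complex.exp (Complex.I * t) / (mu * lam)) := by
        funext t; rw [hform t]; simp
      have hd : HasDerivAt (fun t : ℝ => T t 0 0) (c * (Complex.I * ζ / (mu * lam))) τ := by
        rw [hf]; exact ((hexp.div_const (mu * lam)).const_add _).const_mul c
      show (Matrix.of fun i j => deriv (fun t => T t i j) τ) 0 0 = (T τ * C) 0 0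
      rw [Matrix.of_apply, hd.deriv, hpart1, hC]
      simp only [Matrix.mul_apply, Fin.sum_univ_two, Matrix.smul_apply, Matrix.of_apply, Matrix.cons_val',
        Matrix.cons_val_zero, Matrix.cons_val_one, Matrix.head_cons, Matrix.empty_val',
        Matrix.cons_val_fin_one, Matrix.head_fin_const, smul_eq_mul]
      rw [hrb2]
      field_simp
      ring
    · have hf : (fun t : ℝ => T t 0 1) = fun t : ℝ =>
          c * (-((starRingEnd ℂ) α * mu * Complex.exp (-(Complex.I * t))) -
            (starRingEnd ℂ) β / lam) := by
        funext t; rw [hform t]; simp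
      have hd : HasDerivAt (fun t : ℝ => T t 0 1)
          (c * (-((starRingEnd ℂ) α * mu * (-(Complex.I * ζ⁻¹))))) τ := by
        rw [hf]
        exact (((hexpneg.const_mul ((starRingEnd ℂ) α * mu)).neg).sub_const _).const_mul c
      show (Matrix.of fun i j => deriv (fun t => T t i j) τ) 0 1 = (T τ * C) 0 1
      rw [Matrix.of_apply, hd.deriv, hpart1, hC]
      simp only [Matrix.mul_apply, Fin.sum_univ_two, Matrix.smul_apply, Matrix.of_apply, Matrix.cons_val',
        Matrix.cons_val_zero, Matrix.cons_val_one, Matrix.head_cons, Matrix.empty_val',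
        Matrix.cons_val_fin_one, Matrix.head_fin_const, smul_eq_mul]
      rw [hrb2]
      field_simp
      ring
    · have hf : (fun t : ℝ => T t 1 0) = fun t : ℝ =>
          c * (-(β * lam) - α * Complex.exp (Complex.I * t) / mu) := by
        funext t; rw [hform t]; simp
      have hd : HasDerivAt (fun t : ℝ => T t 1 0)
          (c * (-(α * (Complex.I * ζ) / mu))) τ := by
        rw [hf]
        have := (((hexp.const_mul α).div_const mu).const_sub (-(β * lam))).const_mul c
        simpa [sub_eq_add_neg, mul_comm] using this
      show (Matrix.of fun i j => deriv (fun t => T t i j) τ) 1 0 = (T τ * C) 1 0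
      rw [Matrix.of_apply, hd.deriv, hpart1, hC]
      simp only [Matrix.mul_apply, Fin.sum_univ_two, Matrix.smul_apply, Matrix.of_apply, Matrix.cons_val',
        Matrix.cons_val_zero, Matrix.cons_val_one, Matrix.head_cons, Matrix.empty_val',
        Matrix.cons_val_fin_one, Matrix.head_fin_const, smul_eq_mul]
      rw [hrb2]
      field_simp
      ring
    · have hf : (fun t : ℝ => T t 1 1) = fun t : ℝ =>
          c * (mu * lam * Complex.exp (-(Complex.I * t)) + α * (starRingEnd ℂ) β) := by
        funext t; rw [hform t]; simp
      have hd : HasDerivAt (fun t : ℝ => T t 1 1)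
          (c * (mu * lam * (-(Complex.I * ζ⁻¹)))) τ := by
        rw [hf]
        exact ((hexpneg.const_mul (mu * lam)).add_const _).const_mul c
      show (Matrix.of fun i j => deriv (fun t => T t i j) τ) 1 1 = (T τ * C) 1 1
      rw [Matrix.of_apply, hd.deriv, hpart1, hC]
      simp only [Matrix.mul_apply, Fin.sum_univ_two, Matrix.smul_apply, Matrix.of_apply, Matrix.cons_val',
        Matrix.cons_val_zero, Matrix.cons_val_one, Matrix.head_cons, Matrix.empty_val',
        Matrix.cons_val_fin_one, Matrix.head_fin_const, smul_eq_mul]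
      rw [hrb2]
      field_simp
      ring
  have hdet : IsUnit (T τ).det := by
    have hd1 : (T τ).det = 1 := by
      rw [hpart1, Matrix.det_smul, Matrix.det_fin_two_of]
      simp only [Fintype.card_fin, hc]
      have h2 : ((rho α * rho β : ℝ) : ℂ) ^ 2 =
          (1 - α * (starRingEnd ℂ) α) * (1 - β * (starRingEnd ℂ) β) := by
        push_cast
        rw [mul_pow, hra2, hrb2]
      rw [inv_pow, inv_mul_eq_one₀ (pow_ne_zero 2 hcc), h2]
      field_simp
      ring
    rw [hd1]; exact isUnit_one
  rw [hder, ← mul_assoc, Matrix.nonsing_inv_mul _ hdet, one_mul]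
end
end

section
/- (Gesztesy–Zinchenko transfer-matrix recursion.) Let α_n ∈ 𝔻, λ_n ∈ ∂𝔻 for n ∈ ℤ, set ρ_n = √(1−|α_n|²), let z ∈ ℂ∖{0}, and suppose u, v : ℤ → ℂ satisfy, for every n ∈ ℤ: λ_{2n}(conj(α_{2n})·v_{2n} + ρ_{2n}·v_{2n+1}) = z·u_{2n}, λ_{2n}(ρ_{2n}·v_{2n} − α_{2n}·v_{2n+1}) = z·u_{2n+1}, λ_{2n−1}(conj(α_{2n−1})·u_{2n−1} + ρ_{2n−1}·u_{2n}) = v_{2n−1}, and λ_{2n−1}(ρ_{2n−1}·u_{2n−1} − α_{2n−1}·u_{2n}) = v_{2n} (i.e. ℳu = v and ℒv = zu, so ℰu = zu for the pCMV operator ℰ = ℒℳ). Then for every n ∈ ℤ: (u_{2n}, v_{2n})ᵀ = P(α_{2n−1},λ_{2n−1};z)·(u_{2n−1}, v_{2n−1})ᵀ and (u_{2n+1}, v_{2n+1})ᵀ = Q(α_{2n},λ_{2n};z)·(u_{2n}, v_{2n})ᵀ. -/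
noncomputable section
open scoped ENNReal
open Complex Matrix

lemma rho_ne {w : ℂ} (h : ‖w‖ < 1) : ((rho w : ℝ) : ℂ) ≠ 0 := by
  have h2 : ‖w‖ ^ 2 < 1 := by
    nlinarith [norm_nonneg w]
  have : (0:ℝ) < rho w := Real.sqrt_pos.mpr (by linarith)
  exact_mod_cast this.ne'

lemma rho_sq {w : ℂ} (h : ‖w‖ < 1) :
    ((rho w : ℝ) : ℂ) * ((rho w : ℝ) : ℂ) = 1 - (starRingEnd ℂ) w * w := by
  have h2 : ‖w‖ ^ 2 ≤ 1 := by
    nlinarith [norm_nonneg w]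
  have hr : (rho w) * (rho w) = 1 - ‖w‖ ^ 2 :=
    Real.mul_self_sqrt (by linarith)
  have hc : (starRingEnd ℂ) w * w = (‖w‖ ^ 2 : ℝ) := by
    rw [mul_comm, Complex.mul_conj]
    push_cast [Complex.sq_norm]
    rfl
  rw [hc]
  exact_mod_cast hr

lemma lam_ne {w : ℂ} (h : ‖w‖ = 1) : w ≠ 0 := by
  intro h0; rw [h0] at h; simp at h

/-- Gesztesy–Zinchenko transfer-matrix recursion. If ℳu = v and
ℒv = zu (so that ℰu = zu), then consecutive pairs (u_n, v_n) are related by the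
transfer matrices P and Q. -/
theorem gz_recursion
    (a lam : ℤ → ℂ) (ha : ∀ n, ‖a n‖ < 1) (hl : ∀ n, ‖lam n‖ = 1)
    (z : ℂ) (hz : z ≠ 0) (u v : ℤ → ℂ)
    (h1 : ∀ n : ℤ, lam (2 * n) * ((starRingEnd ℂ) (a (2 * n)) * v (2 * n) +
        (rho (a (2 * n)) : ℂ) * v (2 * n + 1)) = z * u (2 * n))
    (h2 : ∀ n : ℤ, lam (2 * n) * ((rho (a (2 * n)) : ℂ) * v (2 * n) -
        a (2 * n) * v (2 * n + 1)) = z * u (2 * n + 1))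
    (h3 : ∀ n : ℤ, lam (2 * n - 1) * ((starRingEnd ℂ) (a (2 * n - 1)) * u (2 * n - 1) +
        (rho (a (2 * n - 1)) : ℂ) * u (2 * n)) = v (2 * n - 1))
    (h4 : ∀ n : ℤ, lam (2 * n - 1) * ((rho (a (2 * n - 1)) : ℂ) * u (2 * n - 1) -
        a (2 * n - 1) * u (2 * n)) = v (2 * n)) :
    ∀ n : ℤ,
      Matrix.mulVec (Pmat (a (2 * n - 1)) (lam (2 * n - 1)) z)
          ![u (2 * n - 1), v (2 * n - 1)] = ![u (2 * n), v (2 * n)] ∧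
      Matrix.mulVec (Qmat (a (2 * n)) (lam (2 * n)) z)
          ![u (2 * n), v (2 * n)] = ![u (2 * n + 1), v (2 * n + 1)] := by
  intro n
  have hρP := rho_ne (ha (2 * n - 1))
  have hρQ := rho_ne (ha (2 * n))
  have hsP := rho_sq (ha (2 * n - 1))
  have hsQ := rho_sq (ha (2 * n))
  have hlamP := lam_ne (hl (2 * n - 1))
  have hlamQ := lam_ne (hl (2 * n))
  have e1 := h1 n
  have e2 := h2 n
  have e3 := h3 n
  have e4 := h4 n
  constructor
  · funext i
    fin_cases i <;>
      simp only [Pmat, Matrix.mulVec, dotProduct, Fin.sum_univ_two,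
        Matrix.smul_apply, Matrix.cons_val', Matrix.cons_val_zero, Matrix.cons_val_one,
        Matrix.head_cons, Matrix.empty_val', Matrix.cons_val_fin_one, Matrix.head_fin_const,
        smul_eq_mul, Matrix.cons_val_fin_one, Matrix.of_apply, Fin.zero_eta, Fin.mk_one] <;>
      field_simp
    · linear_combination (-1 : ℂ) * e3
    · linear_combination a (2*n-1) * e3 + (rho (a (2*n-1)) : ℂ) * e4 - lam (2*n-1) * u (2*n-1) * hsP
  · funext i
    fin_cases i <;>
      simp only [Qmat, Matrix.mulVec, dotProduct, Fin.sum_univ_two,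
        Matrix.smul_apply, Matrix.cons_val', Matrix.cons_val_zero, Matrix.cons_val_one,
        Matrix.head_cons, Matrix.empty_val', Matrix.cons_val_fin_one, Matrix.head_fin_const,
        smul_eq_mul, Matrix.cons_val_fin_one, Matrix.of_apply, Fin.zero_eta, Fin.mk_one] <;>
      field_simp
    · linear_combination a (2*n) * e1 + (rho (a (2*n)) : ℂ) * e2 - lam (2*n) * v (2*n) * hsQ
    · linear_combination (-1 : ℂ) * e1
end
end
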